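/- Let m, c ∈ ℤ and F_m(X, Y) = X⁴ − mX³Y − 6X²Y² + mXY³ + Y⁴. If x, y ∈ ℤ satisfy gcd(x, y) = 1, (x, y) ≡ (0, 1) or (1, 0) modulo 2 (i.e., exactly one of x, y is even), and F_m(x, y) = c, then c is odd, and setting x' = x − y, y' = x + y, one has gcd(x', y') = 1, both x' and y' odd, and F_m(x', y') = −4c. -/

import Mathlib

open Polynomial

/-- The simplest quartic polynomial `X^4 - a*X^3 - 6*X^2 + a*X + 1`. -/
noncomputable def simplestQuartic {K : Type*} [Field K] (a : K) : K[X] :=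
  X ^ 4 - C a * X ^ 3 - 6 * X ^ 2 + C a * X + 1

/-- The splitting field of `p` over `K` inside a fixed algebraic closure of `K`. -/
noncomputable def splittingFieldIn (K : Type*) [Field K] (p : K[X]) :
    IntermediateField K (AlgebraicClosure K) :=
  IntermediateField.adjoin K (p.rootSet (AlgebraicClosure K))

/-- The binary quartic form `F_m(x, y) = x^4 - m*x^3*y - 6*x^2*y^2 + m*x*y^3 + y^4`. -/
def Fq (m x y : ℤ) : ℤ := x ^ 4 - m * x ^ 3 * y - 6 * x ^ 2 * y ^ 2 + m * x * y ^ 3 + y ^ 4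

/-- `L_m`: the splitting field of the simplest quartic polynomial `f_m` over `ℚ`
inside a fixed algebraic closure of `ℚ`. -/
noncomputable def Lq (m : ℤ) : IntermediateField ℚ (AlgebraicClosure ℚ) :=
  splittingFieldIn ℚ (simplestQuartic (m : ℚ))

theorem simplest_quartic_primitive_solution_transform
    (m c x y : ℤ) (hgcd : Int.gcd x y = 1)
    (hpar : (Even x ∧ Odd y) ∨ (Odd x ∧ Even y))
    (hF : Fq m x y = c) :
    Odd c ∧ Int.gcd (x - y) (x + y) = 1 ∧ Odd (x - y) ∧ Odd (x + y) ∧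
      Fq m (x - y) (x + y) = -4 * c := by
  have hodd1 : Odd (x - y) := by
    rcases hpar with ⟨hx, hy⟩ | ⟨hx, hy⟩ <;>
      simp only [Int.even_iff, Int.odd_iff] at hx hy ⊢ <;> omega
  have hodd2 : Odd (x + y) := by
    rcases hpar with ⟨hx, hy⟩ | ⟨hx, hy⟩ <;>
      simp only [Int.even_iff, Int.odd_iff] at hx hy ⊢ <;> omega
  have hoddc : Odd c := by
    subst hF
    rcases hpar with ⟨⟨a, rfl⟩, ⟨b, rfl⟩⟩ | ⟨⟨a, rfl⟩, ⟨b, rfl⟩⟩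
    · exact ⟨8*a^4 - 4*m*a^3*(2*b+1) - 12*a^2*(2*b+1)^2 + m*a*(2*b+1)^3
        + 8*b^4 + 16*b^3 + 12*b^2 + 4*b, by unfold Fq; ring⟩
    · exact ⟨8*a^4 + 16*a^3 + 12*a^2 + 4*a - m*(2*a+1)^3*b - 12*(2*a+1)^2*b^2
        + 4*m*(2*a+1)*b^3 + 8*b^4, by unfold Fq; ring⟩
  have hgd : (Int.gcd (x - y) (x + y) : ℤ) ∣ 2 := by
    have h1 : (Int.gcd (x - y) (x + y) : ℤ) ∣ x - y := Int.gcd_dvd_left _ _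
    have h2 : (Int.gcd (x - y) (x + y) : ℤ) ∣ x + y := Int.gcd_dvd_right _ _
    have hx2 : (Int.gcd (x - y) (x + y) : ℤ) ∣ 2 * x := by
      have := dvd_add h1 h2; rwa [show x - y + (x + y) = 2 * x by ring] at this
    have hy2 : (Int.gcd (x - y) (x + y) : ℤ) ∣ 2 * y := by
      have := dvd_sub h2 h1; rwa [show x + y - (x - y) = 2 * y by ring] at this
    have := Int.dvd_coe_gcd hx2 hy2
    rwa [Int.gcd_mul_left, hgcd, mul_one] at this
  have hgdn : Int.gcd (x - y) (x + y) ∣ 2 := by exact_mod_cast hgd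
  have hgeq : Int.gcd (x - y) (x + y) = 1 := by
    rcases (Nat.dvd_prime Nat.prime_two).mp hgdn with h | h
    · exact h
    · exfalso
      have h2 : ((x - y).gcd (x + y) : ℤ) ∣ x - y := Int.gcd_dvd_left _ _
      rw [h] at h2; norm_num at h2
      rw [Int.odd_iff] at hodd1; omega
  refine ⟨hoddc, hgeq, hodd1, hodd2, ?_⟩
  subst hF; unfold Fq; ring
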